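/- Let a_0,...,a_n (n ≥ 2) be positive integers with gcd(a_0,...,â_j,...,a_n) = 1 for each j. Let l = lcm(a_0,...,a_n), and let Q be the polytope with vertices (l/a_0)e_0, (l/a_1)e_1, ..., (l/a_n)e_n in the affine hyperplane Λ = { x ∈ ℝ^{n+1} : a_0x_0 + ... + a_nx_n = l }, with lattice Λ ∩ ℤ^{n+1}. Then for each 0 ≤ i < j ≤ n, the lattice length of the edge of Q joining the i-th and j-th vertices equals l / lcm(a_i, a_j). -/

import Mathlib

open Finset

noncomputable section

/-- Cast an integer vector to a real vector. -/
def castZ {n : ℕ} (u : Fin n → ℤ) : Fin n → ℝ := fun j => (u j : ℝ)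

/-- Membership in the cone spanned by the vectors `w`. -/
def inCone {n m : ℕ} (w : Fin m → (Fin n → ℝ)) (x : Fin n → ℝ) : Prop :=
  ∃ a : Fin m → ℝ, (∀ i, 0 ≤ a i) ∧ x = ∑ i, a i • w i

/-- The set of total weights of nonnegative representations of `x` in terms of `w`. -/
def weightSet {n m : ℕ} (w : Fin m → (Fin n → ℝ)) (x : Fin n → ℝ) : Set ℝ :=
  { t | ∃ a : Fin m → ℝ, (∀ i, 0 ≤ a i) ∧ x = ∑ i, a i • w i ∧ t = ∑ i, a i }

/-- The maximum weight function `W`. -/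
def maxWeight {n m : ℕ} (w : Fin m → (Fin n → ℝ)) (x : Fin n → ℝ) : ℝ :=
  sSup (weightSet w x)

/-- A lattice vector is primitive. -/
def Primitive {n : ℕ} (v : Fin n → ℤ) : Prop :=
  v ≠ 0 ∧ ∀ (z : ℤ) (q : Fin n → ℤ), 0 < z → v = z • q → z = 1

/-- Lattice points of the cone. -/
def latticeInCone {n m : ℕ} (w : Fin m → (Fin n → ℤ)) (u : Fin n → ℤ) : Prop :=
  inCone (fun i => castZ (w i)) (castZ u)

/-- `χ^u ∈ m_Q^k` : `u` is a sum of `k` nonzero lattice points of the cone plus a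
lattice point of the cone. -/
def inPowM {n m : ℕ} (w : Fin m → (Fin n → ℤ)) (u : Fin n → ℤ) (k : ℕ) : Prop :=
  ∃ v : Fin k → (Fin n → ℤ), (∀ i, latticeInCone w (v i) ∧ v i ≠ 0) ∧
    latticeInCone w (u - ∑ i, v i)

/-- `k_u` : the largest `k` such that `χ^u ∈ m_Q^k`. -/
def kU {n m : ℕ} (w : Fin m → (Fin n → ℤ)) (u : Fin n → ℤ) : ℕ :=
  sSup {k | inPowM w u k}

/-- Lattice points of the fundamental box `S_Q`. -/
def inBox {n m : ℕ} (w : Fin m → (Fin n → ℤ)) (u : Fin n → ℤ) : Prop :=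
  ∃ a : Fin m → ℝ, (∀ i, 0 ≤ a i ∧ a i < 1) ∧ castZ u = ∑ i, a i • castZ (w i)

/-- The constant `Γ_Q`. -/
def gammaQ {n m : ℕ} (w : Fin m → (Fin n → ℤ)) : ℝ :=
  sSup { x | ∃ u, inBox w u ∧
    x = maxWeight (fun i => castZ (w i)) (castZ u) - (kU w u : ℝ) }

end

/-- For the weighted projective space polytope `Q` with vertices
`(l/aᵢ)eᵢ` in the hyperplane `Σ aₜxₜ = l` (`l = lcm(a₀,...,aₙ)`, the weights reduced so
that omitting any one of them gives gcd 1), the lattice length of the edge joining the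
`i`-th and `j`-th vertices equals `l / lcm(aᵢ, aⱼ)`: the difference of the vertices is
`l / lcm(aᵢ, aⱼ)` times a primitive vector of the lattice `Λ₀ ∩ ℤ^{n+1}`. -/
theorem weighted_projective_edge_lengths (n : ℕ) (hn : 2 ≤ n)
    (a : Fin (n + 1) → ℕ) (hpos : ∀ i, 0 < a i)
    (hgcd : ∀ j : Fin (n + 1), Finset.gcd (Finset.univ.erase j) a = 1)
    (l : ℕ) (hl : l = Finset.univ.lcm a) :
    ∀ i j : Fin (n + 1), i < j →
      ∃ p : Fin (n + 1) → ℤ,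
        (∑ t, (a t : ℤ) * p t = 0) ∧ Primitive p ∧
        (∀ t, ((if t = j then ((l : ℚ) / (a j : ℚ)) else 0) -
               (if t = i then ((l : ℚ) / (a i : ℚ)) else 0)) =
          ((l : ℚ) / (Nat.lcm (a i) (a j) : ℚ)) * (p t : ℚ)) := by
  intro i j hij
  have hne : i ≠ j := ne_of_lt hij
  set g := Nat.gcd (a i) (a j) with hg
  have hgpos : 0 < g := Nat.gcd_pos_of_pos_left _ (hpos i)
  have hgi : g ∣ a i := Nat.gcd_dvd_left _ _
  have hgj : g ∣ a j := Nat.gcd_dvd_right _ _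
  refine ⟨fun t => if t = j then ((a i / g : ℕ) : ℤ) else
      if t = i then -((a j / g : ℕ) : ℤ) else 0, ?_, ?_, ?_⟩
  · have hrw : ∀ t : Fin (n + 1), (a t : ℤ) * (if t = j then ((a i / g : ℕ) : ℤ)
        else if t = i then -((a j / g : ℕ) : ℤ) else 0) =
        (if t = j then (a j : ℤ) * ((a i / g : ℕ) : ℤ) else 0) +
        (if t = i then -((a i : ℤ) * ((a j / g : ℕ) : ℤ)) else 0) := by
      intro t
      by_cases htj : t = j
      · subst htj; simp [if_neg hne.symm]
      · by_cases hti : t = i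
        · subst hti; simp [htj]
        · simp [htj, hti]
    simp only [hrw]
    rw [Finset.sum_add_distrib, Finset.sum_ite_eq' Finset.univ,
      Finset.sum_ite_eq' Finset.univ]
    simp only [Finset.mem_univ, if_pos]
    have key : a i * (a j / g) = a j * (a i / g) := by
      rw [← Nat.mul_div_assoc _ hgj, ← Nat.mul_div_assoc _ hgi, Nat.mul_comm]
    have keyZ : (a j : ℤ) * ((a i / g : ℕ) : ℤ) = (a i : ℤ) * ((a j / g : ℕ) : ℤ) := by
      exact_mod_cast key.symm
    rw [keyZ]; ring
  · constructor
    · intro h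
      have h0 : ((a i / g : ℕ) : ℤ) = 0 := by simpa using congrFun h j
      have hpos' : 0 < a i / g := Nat.div_pos (Nat.le_of_dvd (hpos i) hgi) hgpos
      have : a i / g = 0 := by exact_mod_cast h0
      omega
    · intro z q hz hzq
      have hj' := congrFun hzq j
      have hi' := congrFun hzq i
      simp only [if_pos rfl, if_neg hne, Pi.smul_apply, smul_eq_mul] at hj' hi'
      have hd1 : z ∣ ((a i / g : ℕ) : ℤ) := ⟨q j, hj'⟩
      have hd2 : z ∣ ((a j / g : ℕ) : ℤ) := by
        refine ⟨-q i, ?_⟩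
        have : -((a j / g : ℕ) : ℤ) = z * q i := hi'
        linarith
      have hcop : Nat.Coprime (a i / g) (a j / g) :=
        Nat.coprime_div_gcd_div_gcd hgpos
      have : z ∣ 1 := by
        have := Int.dvd_coe_gcd hd1 hd2
        rwa [Int.gcd_natCast_natCast, hcop] at this
        -- fallback
      exact Int.eq_one_of_dvd_one (le_of_lt hz) this
  · intro t
    have hL : (g : ℚ) * (Nat.lcm (a i) (a j) : ℚ) = (a i : ℚ) * (a j : ℚ) := by
      rw [← Nat.cast_mul, ← Nat.cast_mul, Nat.gcd_mul_lcm]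
    have hgQ : (g : ℚ) ≠ 0 := Nat.cast_ne_zero.mpr hgpos.ne'
    have haiQ : (a i : ℚ) ≠ 0 := Nat.cast_ne_zero.mpr (hpos i).ne'
    have hajQ : (a j : ℚ) ≠ 0 := Nat.cast_ne_zero.mpr (hpos j).ne'
    have hLQ : ((Nat.lcm (a i) (a j) : ℕ) : ℚ) ≠ 0 := by
      intro h0
      rw [h0, mul_zero] at hL
      exact hajQ (by
        have := hL.symm
        rcases mul_eq_zero.mp this with h | h
        · exact absurd h haiQ
        · exact h)
    have hcasti : ((a i / g : ℕ) : ℚ) = (a i : ℚ) / (g : ℚ) :=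
      Nat.cast_div hgi hgQ
    have hcastj : ((a j / g : ℕ) : ℚ) = (a j : ℚ) / (g : ℚ) :=
      Nat.cast_div hgj hgQ
    by_cases htj : t = j
    · subst htj
      simp only [if_pos rfl, if_neg hne.symm, sub_zero, Int.cast_natCast]
      simp only [if_true, Int.cast_natCast, hcasti]
      field_simp
      nlinarith [hL]
    · by_cases hti : t = i
      · subst hti
        simp only [if_neg htj, if_pos rfl, zero_sub, Int.cast_neg, Int.cast_natCast]
        simp only [if_true, Int.cast_neg, Int.cast_natCast, hcastj]
        field_simp
        nlinarith [hL]
      · simp [htj, hti]
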